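/- Let Φ ∈ ℝ^{np×n} be (n-stacked) q-error correctable, and for each time k let ẑ(k) = Φx(k) + v(k) + e(k) where e(k) ∈ Σ_qⁿ and each block of v(k) satisfies ‖v_i(k)‖₂ ≤ v_max(k). Fix an integer r with q ≤ r ≤ 2q. If at each k the estimate x̂(k) is produced so that |{i ∈ {1,…,p} : ‖ẑ_i(k) − Φ_{Γᵢⁿ}x̂(k)‖₂ > ϑ_{p,q,r}(Φ)·v_max(k)}| ≤ q (as guaranteed by either the calculator step or the minimizer step of the decoder), then ‖x̂(k) − x(k)‖₂ ≤ κ^c_{p,q,r}(Φ)·v_max(k) for all k ≥ 0. -/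

import Mathlib

open scoped Classical
open Finset Matrix

noncomputable section

namespace SecureEst

variable {n p : ℕ}

/-- The `i`-th `n`-block of an `n`-stacked vector. -/
def blk (z : Fin p × Fin n → ℝ) (i : Fin p) : Fin n → ℝ := fun j => z (i, j)

/-- The `n`-stacked support of a stacked vector. -/
def blockSupp (z : Fin p × Fin n → ℝ) : Finset (Fin p) :=
  Finset.univ.filter fun i => blk z i ≠ 0

/-- The `n`-stacked ℓ⁰ "norm": number of nonzero blocks. -/
def l0n (z : Fin p × Fin n → ℝ) : ℕ := (blockSupp z).card

/-- `n`-stacked `q`-sparsity: membership in `Σ_qⁿ`. -/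
def Sparse (q : ℕ) (z : Fin p × Fin n → ℝ) : Prop := l0n z ≤ q

/-- Euclidean (ℓ²) norm of a real vector. -/
def euclNorm {m : Type*} [Fintype m] (x : m → ℝ) : ℝ := Real.sqrt (∑ i, x i ^ 2)

/-- `Φ_{Λⁿ}`: zero out the row-blocks of `Φ` outside `Λ`. -/
def zeroB (Λ : Finset (Fin p)) (Φ : Matrix (Fin p × Fin n) (Fin n) ℝ) :
    Matrix (Fin p × Fin n) (Fin n) ℝ :=
  fun ij k => if ij.1 ∈ Λ then Φ ij k else 0

/-- `z_{Λⁿ}`: zero out the blocks of a stacked vector outside `Λ`. -/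
def zeroV (Λ : Finset (Fin p)) (z : Fin p × Fin n → ℝ) : Fin p × Fin n → ℝ :=
  fun ij => if ij.1 ∈ Λ then z ij else 0

/-- `Φ_{Γᵢⁿ}`: the `i`-th row-block of `Φ`. -/
def rowBlk (Φ : Matrix (Fin p × Fin n) (Fin n) ℝ) (i : Fin p) :
    Matrix (Fin n) (Fin n) ℝ := fun j k => Φ (i, j) k

/-- Moore–Penrose pseudoinverse (full-column-rank formula `(MᵀM)⁻¹Mᵀ`). -/
def pinv {m k : Type*} [Fintype m] [Fintype k] [DecidableEq k]
    (M : Matrix m k ℝ) : Matrix k m ℝ := (Mᵀ * M)⁻¹ * Mᵀ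

/-- Spectral norm (largest singular value) of a real matrix. -/
def specNorm {m k : Type*} [Fintype m] [Fintype k] (M : Matrix m k ℝ) : ℝ :=
  sSup {r | ∃ x : k → ℝ, euclNorm x = 1 ∧ r = euclNorm (M.mulVec x)}

/-- Minimum singular value of a (tall) real matrix. -/
def sigmaMin {m k : Type*} [Fintype m] [Fintype k] (M : Matrix m k ℝ) : ℝ :=
  sInf {r | ∃ x : k → ℝ, euclNorm x = 1 ∧ r = euclNorm (M.mulVec x)}

/-- `(n-stacked) q`-error detectability. -/
def ErrDetectable (Φ : Matrix (Fin p × Fin n) (Fin n) ℝ) (q : ℕ) : Prop :=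
  ∀ x x' : Fin n → ℝ, ∀ e : Fin p × Fin n → ℝ,
    Sparse q e → Φ.mulVec x + e = Φ.mulVec x' → x = x'

/-- `(n-stacked) q`-error correctability. -/
def ErrCorrectable (Φ : Matrix (Fin p × Fin n) (Fin n) ℝ) (q : ℕ) : Prop :=
  ∀ x₁ x₂ : Fin n → ℝ, ∀ e₁ e₂ : Fin p × Fin n → ℝ,
    Sparse q e₁ → Sparse q e₂ →
      Φ.mulVec x₁ + e₁ = Φ.mulVec x₂ + e₂ → x₁ = x₂

/-- `(n-stacked)` cospark. -/
def cosparkN (Φ : Matrix (Fin p × Fin n) (Fin n) ℝ) : ℕ :=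
  sInf {m : ℕ | ∃ x : Fin n → ℝ, x ≠ 0 ∧ m = l0n (Φ.mulVec x)}

/-- `ρ_{p,q}(Φ)`. -/
def rho (Φ : Matrix (Fin p × Fin n) (Fin n) ℝ) (q : ℕ) : ℝ :=
  sInf {r | ∃ Λ : Finset (Fin p), Λ.card = p - q ∧ r = sigmaMin (zeroB Λ Φ)}

/-- `η_{p,q}(Φ)`. -/
def eta (Φ : Matrix (Fin p × Fin n) (Fin n) ℝ) (q : ℕ) : ℝ :=
  sSup {r | ∃ Λ : Finset (Fin p), Λ.card = p - q ∧
    ∃ i : Fin p, i ∉ Λ ∧ r = specNorm (rowBlk Φ i * pinv (zeroB Λ Φ))}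

/-- `κ^d_{p,q}(Φ)`. -/
def kappaD (Φ : Matrix (Fin p × Fin n) (Fin n) ℝ) (q : ℕ) : ℝ :=
  (Real.sqrt (p : ℝ) + 1) * Real.sqrt ((p - q : ℕ) : ℝ) / rho Φ q

/-- `κ^e_{p,q}(Φ)`. -/
def kappaE (Φ : Matrix (Fin p × Fin n) (Fin n) ℝ) (q : ℕ) : ℝ :=
  (eta Φ q * Real.sqrt ((p - q : ℕ) : ℝ) + 1) * (Real.sqrt (p : ℝ) + 1)

/-- The finite candidate set `F_{p,r}(ẑ)`. -/
def Fset (Φ : Matrix (Fin p × Fin n) (Fin n) ℝ) (r : ℕ) (z : Fin p × Fin n → ℝ) :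
    Set (Fin n → ℝ) :=
  {χ | ∃ Λ : Finset (Fin p), Λ.card = p - r ∧
    χ = (pinv (zeroB Λ Φ)).mulVec (zeroV Λ z)}

/-- `η'_{p,q,r}(Φ)`. -/
def eta' (Φ : Matrix (Fin p × Fin n) (Fin n) ℝ) (q r : ℕ) : ℝ :=
  sSup {a | ∃ Λ : Finset (Fin p), Λ.card = p - q ∧
    a = sInf {b | ∃ Λ' : Finset (Fin p), Λ' ⊆ Λ ∧ Λ'.card = p - r ∧
      b = sSup {c | ∃ i ∈ Λ \ Λ',
        c = specNorm (rowBlk Φ i * pinv (zeroB Λ' Φ))}}}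

/-- `ϑ_{p,q,r}(Φ)`. -/
def theta (Φ : Matrix (Fin p × Fin n) (Fin n) ℝ) (q r : ℕ) : ℝ :=
  max (eta' Φ q r * Real.sqrt ((p - r : ℕ) : ℝ) + 1) (Real.sqrt ((p - r : ℕ) : ℝ))

/-- `κ^c_{p,q,r}(Φ)`. -/
def kappaC (Φ : Matrix (Fin p × Fin n) (Fin n) ℝ) (q r : ℕ) : ℝ :=
  (theta Φ q r + 1) * Real.sqrt ((p - 2 * q : ℕ) : ℝ) / rho Φ (2 * q)

/-- `κ^{c'}_{p,q,r}(Φ)`. -/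
def kappaC' (Φ : Matrix (Fin p × Fin n) (Fin n) ℝ) (q r : ℕ) : ℝ :=
  (theta Φ q r - 1) / sSup {c | ∃ i : Fin p, c = specNorm (rowBlk Φ i)}

/-- Stacked observability matrix `G` with row-blocks `Gᵢ = [cᵢᵀ (cᵢA)ᵀ ⋯ (cᵢAⁿ⁻¹)ᵀ]ᵀ`. -/
def obsG (A : Matrix (Fin n) (Fin n) ℝ) (C : Matrix (Fin p) (Fin n) ℝ) :
    Matrix (Fin p × Fin n) (Fin n) ℝ :=
  fun ij k => (C * A ^ (ij.2 : ℕ)) ij.1 k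

/-- `C_Λ`: zero out the rows of `C` outside `Λ`. -/
def zeroRows (Λ : Finset (Fin p)) (C : Matrix (Fin p) (Fin n) ℝ) :
    Matrix (Fin p) (Fin n) ℝ :=
  fun i k => if i ∈ Λ then C i k else 0

/-- Observability of the pair `(A, C)`: the observability matrix has full column rank. -/
def Observable (A : Matrix (Fin n) (Fin n) ℝ) (C : Matrix (Fin p) (Fin n) ℝ) : Prop :=
  (obsG A C).rank = n

/-- `q`-redundant observability. -/
def RedObservable (A : Matrix (Fin n) (Fin n) ℝ) (C : Matrix (Fin p) (Fin n) ℝ)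
    (q : ℕ) : Prop :=
  ∀ Λ : Finset (Fin p), p - q ≤ Λ.card → Observable A (zeroRows Λ C)

/-- Euclidean norm of a complex vector. -/
def enormC {m : Type*} [Fintype m] (v : m → ℂ) : ℝ :=
  Real.sqrt (∑ i, ‖v i‖ ^ 2)

/-- The set `V(A)` of normalized complex eigenvectors of a real matrix `A`. -/
def eigSet (A : Matrix (Fin n) (Fin n) ℝ) : Set (Fin n → ℂ) :=
  {v | (∃ μ : ℂ, (A.map Complex.ofReal).mulVec v = μ • v) ∧ enormC v = 1}

/-- ℓ⁰ norm of a complex vector. -/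
def l0C (y : Fin p → ℂ) : ℕ := (Finset.univ.filter fun i => y i ≠ 0).card

/-- `n`-stacked ℓ⁰ norm of a complex stacked vector. -/
def l0nC (z : Fin p × Fin n → ℂ) : ℕ :=
  (Finset.univ.filter fun i => (fun j => z (i, j)) ≠ (0 : Fin n → ℂ)).card

/-- The dynamic security index `α_d(A, C)`. -/
def alphaD (A : Matrix (Fin n) (Fin n) ℝ) (C : Matrix (Fin p) (Fin n) ℝ) : ℕ :=
  sInf {m : ℕ | ∃ v ∈ eigSet A, m = l0C ((C.map Complex.ofReal).mulVec v)}

end SecureEst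

section Aux
open SecureEst

variable {n p : ℕ}

lemma euclNorm_nonneg' {m : Type*} [Fintype m] (x : m → ℝ) : 0 ≤ euclNorm x :=
  Real.sqrt_nonneg _

lemma euclNorm_zero' {m : Type*} [Fintype m] : euclNorm (0 : m → ℝ) = 0 := by
  simp [euclNorm]

lemma norm_equiv_symm {m : Type*} [Fintype m] (x : m → ℝ) :
    ‖((WithLp.equiv 2 (m → ℝ)).symm x : EuclideanSpace ℝ m)‖ = euclNorm x := by
  rw [EuclideanSpace.norm_eq]
  unfold euclNorm
  congr 1
  refine Finset.sum_congr rfl fun i _ => ?_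
  rw [Real.norm_eq_abs, sq_abs]
  rfl

lemma euclNorm_add_le {m : Type*} [Fintype m] (a b : m → ℝ) :
    euclNorm (a + b) ≤ euclNorm a + euclNorm b := by
  rw [← norm_equiv_symm, ← norm_equiv_symm, ← norm_equiv_symm]
  exact norm_add_le _ _

lemma euclNorm_smul' {m : Type*} [Fintype m] (c : ℝ) (a : m → ℝ) :
    euclNorm (c • a) = |c| * euclNorm a := by
  rw [← norm_equiv_symm, ← norm_equiv_symm]
  have : ((WithLp.equiv 2 (m → ℝ)).symm (c • a) : EuclideanSpace ℝ m)
      = c • ((WithLp.equiv 2 (m → ℝ)).symm a : EuclideanSpace ℝ m) := rfl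
  rw [this, norm_smul, Real.norm_eq_abs]

lemma eq_zero_of_euclNorm {m : Type*} [Fintype m] {x : m → ℝ} (h : euclNorm x = 0) :
    x = 0 := by
  have hs : ∑ i, x i ^ 2 = 0 := by
    have hnn : 0 ≤ ∑ i, x i ^ 2 := Finset.sum_nonneg fun i _ => sq_nonneg _
    exact (Real.sqrt_eq_zero hnn).mp h
  funext i
  have := (Finset.sum_eq_zero_iff_of_nonneg fun i _ => sq_nonneg (x i)).mp hs i
    (Finset.mem_univ i)
  exact (pow_eq_zero_iff two_ne_zero).mp this

lemma euclNorm_pos' {m : Type*} [Fintype m] {x : m → ℝ} (h : x ≠ 0) : 0 < euclNorm x :=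
  lt_of_le_of_ne (euclNorm_nonneg' x) fun he => h (eq_zero_of_euclNorm he.symm)

lemma sq_euclNorm {m : Type*} [Fintype m] (x : m → ℝ) :
    euclNorm x ^ 2 = ∑ i, x i ^ 2 :=
  Real.sq_sqrt (Finset.sum_nonneg fun i _ => sq_nonneg _)

lemma blk_mulVec (Φ : Matrix (Fin p × Fin n) (Fin n) ℝ) (y : Fin n → ℝ) (i : Fin p) :
    blk (Φ.mulVec y) i = (rowBlk Φ i).mulVec y := rfl

lemma zeroB_mulVec (Λ : Finset (Fin p)) (Φ : Matrix (Fin p × Fin n) (Fin n) ℝ)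
    (d : Fin n → ℝ) (i : Fin p) (j : Fin n) :
    (zeroB Λ Φ).mulVec d (i, j) =
      if i ∈ Λ then (rowBlk Φ i).mulVec d j else 0 := by
  by_cases h : i ∈ Λ <;>
    simp [zeroB, rowBlk, Matrix.mulVec, dotProduct, h]

lemma blockSupp_zeroV (A : Finset (Fin p)) (z : Fin p × Fin n → ℝ) :
    blockSupp (zeroV A z) ⊆ A := by
  intro i hi
  rw [blockSupp, Finset.mem_filter] at hi
  by_contra hA
  exact hi.2 (funext fun j => by simp [blk, zeroV, hA])

lemma sparse_zeroV {q : ℕ} (A : Finset (Fin p)) (z : Fin p × Fin n → ℝ)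
    (h : A.card ≤ q) : Sparse q (zeroV A z) :=
  le_trans (Finset.card_le_card (blockSupp_zeroV A z)) h

/-- From correctability: if the block support of `Φx₁ - Φx₂` fits in a set of
cardinality `≤ 2q`, then `x₁ = x₂`. -/
lemma corr_eq {q : ℕ} {Φ : Matrix (Fin p × Fin n) (Fin n) ℝ}
    (hc : ErrCorrectable Φ q) (x₁ x₂ : Fin n → ℝ) (S : Finset (Fin p))
    (hS : S.card ≤ 2 * q)
    (hsupp : ∀ i ∉ S, ∀ j, Φ.mulVec x₁ (i, j) - Φ.mulVec x₂ (i, j) = 0) :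
    x₁ = x₂ := by
  obtain ⟨A, hAS, hAcard⟩ := Finset.exists_subset_card_eq (s := S) (n := S.card - q) (Nat.sub_le _ _)
  set D : Fin p × Fin n → ℝ := Φ.mulVec x₁ - Φ.mulVec x₂ with hD
  refine hc x₁ x₂ (zeroV (S \ A) (-D)) (zeroV A D) ?_ ?_ ?_
  · refine sparse_zeroV _ _ ?_
    rw [Finset.card_sdiff_of_subset hAS, hAcard]
    omega
  · refine sparse_zeroV _ _ ?_
    omega
  · funext ij
    obtain ⟨i, j⟩ := ij
    have hDij : D (i, j) = Φ.mulVec x₁ (i, j) - Φ.mulVec x₂ (i, j) := rfl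
    by_cases hA : i ∈ A
    · have hBn : i ∉ S \ A := fun hmem => (Finset.mem_sdiff.mp hmem).2 hA
      simp only [Pi.add_apply, zeroV, if_neg hBn, if_pos hA]
      rw [hDij]
      ring
    · by_cases hBm : i ∈ S \ A
      · simp only [Pi.add_apply, zeroV, if_pos hBm, if_neg hA, Pi.neg_apply]
        rw [hDij]
        ring
      · have hSn : i ∉ S := fun hiS => hBm (Finset.mem_sdiff.mpr ⟨hiS, hA⟩)
        have h0 := hsupp i hSn j
        simp only [Pi.add_apply, zeroV, if_neg hA, if_neg hBm]
        linarith

lemma zeroB_inj {q : ℕ} {Φ : Matrix (Fin p × Fin n) (Fin n) ℝ}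
    (hc : ErrCorrectable Φ q) (Λ : Finset (Fin p)) (hΛ : Λ.card = p - 2 * q)
    (d : Fin n → ℝ) (h : (zeroB Λ Φ).mulVec d = 0) : d = 0 := by
  refine corr_eq hc d 0 (Finset.univ \ Λ) ?_ ?_
  · rw [Finset.card_sdiff_of_subset (Finset.subset_univ Λ), Finset.card_univ, Fintype.card_fin]
    omega
  · intro i hi j
    have hiΛ : i ∈ Λ := by
      by_contra hiΛ
      exact hi (Finset.mem_sdiff.mpr ⟨Finset.mem_univ i, hiΛ⟩)
    have h1 : (zeroB Λ Φ).mulVec d (i, j) = Φ.mulVec d (i, j) := by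
      simp [zeroB, Matrix.mulVec, dotProduct, hiΛ]
    have h2 : (zeroB Λ Φ).mulVec d (i, j) = 0 := by rw [h]; rfl
    simp [Matrix.mulVec_zero, ← h1, h2]

lemma sigmaMin_nonneg {m k : Type*} [Fintype m] [Fintype k] (M : Matrix m k ℝ) :
    0 ≤ sigmaMin M :=
  Real.sInf_nonneg (by rintro r ⟨x, hx, rfl⟩; exact euclNorm_nonneg' _)

lemma sigmaMin_bddBelow {m k : Type*} [Fintype m] [Fintype k] (M : Matrix m k ℝ) :
    BddBelow {r | ∃ x : k → ℝ, euclNorm x = 1 ∧ r = euclNorm (M.mulVec x)} :=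
  ⟨0, by rintro r ⟨x, hx, rfl⟩; exact euclNorm_nonneg' _⟩

lemma sigmaMin_mul_le {m : Type*} [Fintype m] {N : ℕ} (M : Matrix m (Fin N) ℝ)
    (d : Fin N → ℝ) : sigmaMin M * euclNorm d ≤ euclNorm (M.mulVec d) := by
  rcases eq_or_ne d 0 with rfl | hd
  · simp [Matrix.mulVec_zero, euclNorm_zero']
  · have hpos : 0 < euclNorm d := euclNorm_pos' hd
    have hmem : euclNorm (M.mulVec ((euclNorm d)⁻¹ • d)) ∈
        {r | ∃ x : Fin N → ℝ, euclNorm x = 1 ∧ r = euclNorm (M.mulVec x)} := by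
      refine ⟨(euclNorm d)⁻¹ • d, ?_, rfl⟩
      rw [euclNorm_smul', abs_inv, abs_of_pos hpos, inv_mul_cancel₀ hpos.ne']
    have hle : sigmaMin M ≤ euclNorm (M.mulVec ((euclNorm d)⁻¹ • d)) :=
      csInf_le (sigmaMin_bddBelow M) hmem
    rw [Matrix.mulVec_smul, euclNorm_smul', abs_inv, abs_of_pos hpos] at hle
    calc sigmaMin M * euclNorm d ≤ ((euclNorm d)⁻¹ * euclNorm (M.mulVec d)) * euclNorm d :=
          mul_le_mul_of_nonneg_right hle hpos.le
      _ = euclNorm (M.mulVec d) := by field_simp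

lemma rho_bddBelow (Φ : Matrix (Fin p × Fin n) (Fin n) ℝ) (m : ℕ) :
    BddBelow {r | ∃ Λ : Finset (Fin p), Λ.card = p - m ∧ r = sigmaMin (zeroB Λ Φ)} :=
  ⟨0, by rintro r ⟨Λ, hΛ, rfl⟩; exact sigmaMin_nonneg _⟩

lemma rho_nonneg (Φ : Matrix (Fin p × Fin n) (Fin n) ℝ) (m : ℕ) : 0 ≤ rho Φ m :=
  Real.sInf_nonneg (by rintro r ⟨Λ, hΛ, rfl⟩; exact sigmaMin_nonneg _)

lemma rho_le (Φ : Matrix (Fin p × Fin n) (Fin n) ℝ) (m : ℕ) (Λ : Finset (Fin p))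
    (hΛ : Λ.card = p - m) : rho Φ m ≤ sigmaMin (zeroB Λ Φ) :=
  csInf_le (rho_bddBelow Φ m) ⟨Λ, hΛ, rfl⟩

lemma sigmaMin_pos {m : Type*} [Fintype m] {N : ℕ} (hN : 0 < N)
    (M : Matrix m (Fin N) ℝ) (hinj : ∀ d : Fin N → ℝ, M.mulVec d = 0 → d = 0) :
    0 < sigmaMin M := by
  set F : EuclideanSpace ℝ (Fin N) → ℝ :=
    fun y => euclNorm (M.mulVec ((WithLp.equiv 2 (Fin N → ℝ)) y)) with hF
  have hFc : Continuous F := by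
    have h1 : Continuous fun x : Fin N → ℝ => euclNorm (M.mulVec x) := by
      unfold SecureEst.euclNorm Matrix.mulVec dotProduct
      fun_prop
    exact h1.comp (PiLp.continuous_ofLp 2 fun _ : Fin N => ℝ)
  have hset : {r | ∃ x : Fin N → ℝ, euclNorm x = 1 ∧ r = euclNorm (M.mulVec x)} =
      F '' Metric.sphere (0 : EuclideanSpace ℝ (Fin N)) 1 := by
    ext s
    constructor
    · rintro ⟨x, hx, rfl⟩
      refine ⟨(WithLp.equiv 2 (Fin N → ℝ)).symm x, ?_, ?_⟩
      · rw [mem_sphere_zero_iff_norm, norm_equiv_symm]; exact hx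
      · simp only [hF, Equiv.apply_symm_apply]
    · rintro ⟨y, hy, rfl⟩
      refine ⟨(WithLp.equiv 2 (Fin N → ℝ)) y, ?_, rfl⟩
      have hnorm := mem_sphere_zero_iff_norm.mp hy
      rw [← norm_equiv_symm]
      simpa only [Equiv.symm_apply_apply] using hnorm
  have hcomp : IsCompact (F '' Metric.sphere (0 : EuclideanSpace ℝ (Fin N)) 1) :=
    (isCompact_sphere 0 1).image hFc
  have hne : (F '' Metric.sphere (0 : EuclideanSpace ℝ (Fin N)) 1).Nonempty := by
    refine ⟨F (EuclideanSpace.single ⟨0, hN⟩ (1 : ℝ)), ⟨_, ?_, rfl⟩⟩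
    rw [mem_sphere_zero_iff_norm, EuclideanSpace.norm_single, norm_one]
  have hmem := hcomp.sInf_mem hne
  rw [SecureEst.sigmaMin, hset]
  obtain ⟨y, hy, heq⟩ := hmem
  rw [← heq]
  have hynorm := mem_sphere_zero_iff_norm.mp hy
  have hx0 : (WithLp.equiv 2 (Fin N → ℝ)) y ≠ 0 := by
    intro h0
    have : y = 0 := by
      have := congrArg (WithLp.equiv 2 (Fin N → ℝ)).symm h0
      rwa [Equiv.symm_apply_apply] at this
    rw [this, norm_zero] at hynorm
    exact one_ne_zero hynorm.symm
  exact euclNorm_pos' fun h => hx0 (hinj _ h)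

lemma rho_pos {q : ℕ} {Φ : Matrix (Fin p × Fin n) (Fin n) ℝ}
    (hc : ErrCorrectable Φ q) (hn : 0 < n) : 0 < rho Φ (2 * q) := by
  set S : Set ℝ :=
    {r | ∃ Λ : Finset (Fin p), Λ.card = p - 2 * q ∧ r = sigmaMin (zeroB Λ Φ)}
    with hSdef
  have hfin : S.Finite := by
    have hsub : S ⊆ (fun Λ : Finset (Fin p) => sigmaMin (zeroB Λ Φ)) '' Set.univ := by
      rintro s ⟨Λ, _, rfl⟩; exact ⟨Λ, trivial, rfl⟩
    exact ((Set.finite_univ).image _).subset hsub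
  have hne : S.Nonempty := by
    obtain ⟨Λ, _, hΛ⟩ := Finset.exists_subset_card_eq (s := (Finset.univ : Finset (Fin p)))
      (n := p - 2 * q) (by rw [Finset.card_univ, Fintype.card_fin]; omega)
    exact ⟨sigmaMin (zeroB Λ Φ), Λ, hΛ, rfl⟩
  have hmem := hne.csInf_mem hfin
  obtain ⟨Λ, hΛ, heq⟩ := hmem
  have : rho Φ (2 * q) = sigmaMin (zeroB Λ Φ) := heq
  rw [this]
  exact sigmaMin_pos hn _ (zeroB_inj hc Λ hΛ)

lemma euclNorm_neg' {m : Type*} [Fintype m] (a : m → ℝ) : euclNorm (-a) = euclNorm a := by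
  have : -a = (-1 : ℝ) • a := by funext i; simp
  rw [this, euclNorm_smul']; simp

lemma euclNorm_zeroB_le (Λ : Finset (Fin p)) (Φ : Matrix (Fin p × Fin n) (Fin n) ℝ)
    (d : Fin n → ℝ) (C : ℝ) (hC : 0 ≤ C)
    (h : ∀ i ∈ Λ, euclNorm ((rowBlk Φ i).mulVec d) ≤ C) :
    euclNorm ((zeroB Λ Φ).mulVec d) ≤ Real.sqrt (Λ.card : ℝ) * C := by
  have hterm : ∀ i : Fin p, ∑ j : Fin n, ((zeroB Λ Φ).mulVec d (i, j)) ^ 2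
      = if i ∈ Λ then euclNorm ((rowBlk Φ i).mulVec d) ^ 2 else 0 := by
    intro i
    by_cases hi : i ∈ Λ
    · rw [if_pos hi, sq_euclNorm]
      refine Finset.sum_congr rfl fun j _ => ?_
      rw [zeroB_mulVec, if_pos hi]
    · rw [if_neg hi]
      refine Finset.sum_eq_zero fun j _ => ?_
      rw [zeroB_mulVec, if_neg hi]
      ring
  have hsum : ∑ ij : Fin p × Fin n, ((zeroB Λ Φ).mulVec d ij) ^ 2
      ≤ (Λ.card : ℝ) * C ^ 2 := by
    rw [Fintype.sum_prod_type]
    calc ∑ i : Fin p, ∑ j : Fin n, ((zeroB Λ Φ).mulVec d (i, j)) ^ 2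
        = ∑ i : Fin p, if i ∈ Λ then euclNorm ((rowBlk Φ i).mulVec d) ^ 2 else 0 :=
          Finset.sum_congr rfl fun i _ => hterm i
      _ = ∑ i ∈ Λ, euclNorm ((rowBlk Φ i).mulVec d) ^ 2 := by
          rw [Finset.sum_ite_mem, Finset.univ_inter]
      _ ≤ ∑ i ∈ Λ, C ^ 2 :=
          Finset.sum_le_sum fun i hi => pow_le_pow_left₀ (euclNorm_nonneg' _) (h i hi) 2
      _ = (Λ.card : ℝ) * C ^ 2 := by rw [Finset.sum_const, nsmul_eq_mul]
  calc euclNorm ((zeroB Λ Φ).mulVec d) ≤ Real.sqrt ((Λ.card : ℝ) * C ^ 2) :=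
        Real.sqrt_le_sqrt hsum
    _ = Real.sqrt (Λ.card : ℝ) * C := by
        rw [Real.sqrt_mul (Nat.cast_nonneg _), Real.sqrt_sq hC]

lemma theta_nonneg (Φ : Matrix (Fin p × Fin n) (Fin n) ℝ) (q r : ℕ) :
    0 ≤ theta Φ q r :=
  le_trans (Real.sqrt_nonneg _) (le_max_right _ _)

lemma kappaC_nonneg (Φ : Matrix (Fin p × Fin n) (Fin n) ℝ) (q r : ℕ) :
    0 ≤ kappaC Φ q r :=
  div_nonneg (mul_nonneg (by linarith [theta_nonneg Φ q r]) (Real.sqrt_nonneg _))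
    (rho_nonneg Φ (2 * q))

end Aux

open SecureEst in
/-- Theorem 5: at every time `k`, if the decoder's estimate `xhat(k)`
leaves at most `q` blocks with residual larger than `ϑ_{p,q,r}(Φ)·v_max(k)`, then
`‖xhat(k) − x(k)‖₂ ≤ κ^c_{p,q,r}(Φ)·v_max(k)`. -/
theorem decoder_resilient_estimation {n p : ℕ}
    (Φ : Matrix (Fin p × Fin n) (Fin n) ℝ) (q r : ℕ)
    (hc : ErrCorrectable Φ q) (hqr : q ≤ r) (hr2q : r ≤ 2 * q)
    (x : ℕ → Fin n → ℝ) (e v zhat : ℕ → Fin p × Fin n → ℝ)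
    (vmax : ℕ → ℝ) (xhat : ℕ → Fin n → ℝ)
    (he : ∀ k : ℕ, Sparse q (e k))
    (hv : ∀ k : ℕ, ∀ i : Fin p, euclNorm (blk (v k) i) ≤ vmax k)
    (hz : ∀ k : ℕ, zhat k = Φ.mulVec (x k) + v k + e k)
    (hcount : ∀ k : ℕ, (Finset.univ.filter fun i : Fin p =>
        theta Φ q r * vmax k <
          euclNorm (blk (zhat k) i - (rowBlk Φ i).mulVec (xhat k))).card ≤ q) :
    ∀ k : ℕ, euclNorm (xhat k - x k) ≤ kappaC Φ q r * vmax k := by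
  intro k
  by_cases hp : p ≤ 2 * q
  · -- degenerate case: everything coincides and `κᶜ = 0`.
    have hx : xhat k = x k := by
      refine corr_eq hc (xhat k) (x k) Finset.univ ?_ ?_
      · rw [Finset.card_univ, Fintype.card_fin]; exact hp
      · intro i hi j
        exact absurd (Finset.mem_univ i) hi
    have hκ : kappaC Φ q r = 0 := by
      rw [SecureEst.kappaC]
      have h0 : (p - 2 * q : ℕ) = 0 := by omega
      rw [h0]
      simp
    rw [hx, hκ, sub_self, zero_mul]
    exact le_of_eq euclNorm_zero'
  · push_neg at hp
    have hvk : 0 ≤ vmax k :=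
      le_trans (euclNorm_nonneg' _) (hv k ⟨0, by omega⟩)
    by_cases hn0 : n = 0
    · subst hn0
      have hL : euclNorm (xhat k - x k) = 0 := by
        simp [SecureEst.euclNorm]
      rw [hL]
      exact mul_nonneg (kappaC_nonneg Φ q r) hvk
    · have hn : 0 < n := Nat.pos_of_ne_zero hn0
      set B : Finset (Fin p) := Finset.univ.filter fun i : Fin p =>
        theta Φ q r * vmax k <
          euclNorm (blk (zhat k) i - (rowBlk Φ i).mulVec (xhat k)) with hBdef
      have hBcard : B.card ≤ q := hcount k
      have hScard : (blockSupp (e k)).card ≤ q := he k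
      have hcard : p - 2 * q ≤ (Finset.univ \ (B ∪ blockSupp (e k))).card := by
        rw [Finset.card_sdiff_of_subset (Finset.subset_univ _), Finset.card_univ,
          Fintype.card_fin]
        have := Finset.card_union_le B (blockSupp (e k))
        omega
      obtain ⟨Λ, hΛsub, hΛcard⟩ :=
        Finset.exists_subset_card_eq (n := p - 2 * q) hcard
      set d : Fin n → ℝ := xhat k - x k with hd
      have hθ1 : 0 ≤ theta Φ q r + 1 := by linarith [theta_nonneg Φ q r]
      have hblk : ∀ i ∈ Λ, euclNorm ((rowBlk Φ i).mulVec d) ≤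
          (theta Φ q r + 1) * vmax k := by
        intro i hi
        have hmem := hΛsub hi
        rw [Finset.mem_sdiff, Finset.mem_union] at hmem
        have hiB : i ∉ B := fun h => hmem.2 (Or.inl h)
        have hiS : i ∉ blockSupp (e k) := fun h => hmem.2 (Or.inr h)
        have hres : euclNorm (blk (zhat k) i - (rowBlk Φ i).mulVec (xhat k)) ≤
            theta Φ q r * vmax k := by
          by_contra hlt
          exact hiB (Finset.mem_filter.mpr ⟨Finset.mem_univ i, not_le.mp hlt⟩)
        have hei : blk (e k) i = 0 := by
          by_contra hne
          exact hiS (Finset.mem_filter.mpr ⟨Finset.mem_univ i, hne⟩)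
        have hid : (rowBlk Φ i).mulVec d =
            -(blk (zhat k) i - (rowBlk Φ i).mulVec (xhat k)) + blk (v k) i := by
          funext j
          have hdj : (rowBlk Φ i).mulVec d j
              = (rowBlk Φ i).mulVec (xhat k) j - (rowBlk Φ i).mulVec (x k) j := by
            rw [hd, Matrix.mulVec_sub]
            rfl
          have hzj : blk (zhat k) i j
              = (rowBlk Φ i).mulVec (x k) j + blk (v k) i j + blk (e k) i j := by
            rw [hz k]
            rfl
          have hej : blk (e k) i j = 0 := by rw [hei]; rfl
          rw [hej] at hzj
          simp only [Pi.add_apply, Pi.neg_apply, Pi.sub_apply]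
          rw [hdj, hzj]
          ring
        calc euclNorm ((rowBlk Φ i).mulVec d)
            ≤ euclNorm (-(blk (zhat k) i - (rowBlk Φ i).mulVec (xhat k)))
              + euclNorm (blk (v k) i) := by rw [hid]; exact euclNorm_add_le _ _
          _ = euclNorm (blk (zhat k) i - (rowBlk Φ i).mulVec (xhat k))
              + euclNorm (blk (v k) i) := by rw [euclNorm_neg']
          _ ≤ theta Φ q r * vmax k + vmax k := add_le_add hres (hv k i)
          _ = (theta Φ q r + 1) * vmax k := by ring
      have hbig : euclNorm ((zeroB Λ Φ).mulVec d) ≤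
          Real.sqrt ((p - 2 * q : ℕ) : ℝ) * ((theta Φ q r + 1) * vmax k) := by
        have := euclNorm_zeroB_le Λ Φ d ((theta Φ q r + 1) * vmax k)
          (mul_nonneg hθ1 hvk) hblk
        rwa [hΛcard] at this
      have hσ : sigmaMin (zeroB Λ Φ) * euclNorm d ≤ euclNorm ((zeroB Λ Φ).mulVec d) :=
        sigmaMin_mul_le _ _
      have hρle : rho Φ (2 * q) ≤ sigmaMin (zeroB Λ Φ) := rho_le Φ (2 * q) Λ hΛcard
      have hρpos : 0 < rho Φ (2 * q) := rho_pos hc hn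
      have hchain : rho Φ (2 * q) * euclNorm d ≤
          Real.sqrt ((p - 2 * q : ℕ) : ℝ) * ((theta Φ q r + 1) * vmax k) := by
        calc rho Φ (2 * q) * euclNorm d ≤ sigmaMin (zeroB Λ Φ) * euclNorm d :=
              mul_le_mul_of_nonneg_right hρle (euclNorm_nonneg' _)
          _ ≤ euclNorm ((zeroB Λ Φ).mulVec d) := hσ
          _ ≤ _ := hbig
      have hfin : euclNorm (xhat k - x k) * rho Φ (2 * q) ≤
          (theta Φ q r + 1) * Real.sqrt ((p - 2 * q : ℕ) : ℝ) * vmax k := by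
        calc euclNorm (xhat k - x k) * rho Φ (2 * q)
            = rho Φ (2 * q) * euclNorm d := by rw [hd, mul_comm]
          _ ≤ Real.sqrt ((p - 2 * q : ℕ) : ℝ) * ((theta Φ q r + 1) * vmax k) :=
              hchain
          _ = (theta Φ q r + 1) * Real.sqrt ((p - 2 * q : ℕ) : ℝ) * vmax k := by
              ring
      rw [SecureEst.kappaC, div_mul_eq_mul_div, le_div_iff₀ hρpos]
      exact hfin
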